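/- Assume Γ is connected. Let f : ℤ[Φ/±] → ℤ[Φ/±] be a W-equivariant homomorphism of abelian groups, and for c, d ∈ Φ/± write f_d(t_c) ∈ ℤ for the coefficient of t_d in f(t_c). Suppose that: (i) for every i ∈ I, f_{[e_i]}(t_{[e_i]}) ∈ {+1, −1}; and (ii) for all distinct i, j ∈ I, f_{[e_j]}(t_{[e_i]}) = 0. Then f = id or f = −id. -/

import Mathlib

set_option linter.unusedSectionVars false

open Finset

noncomputable section

namespace ADE

variable {I : Type*} [Fintype I] [DecidableEq I]

/-- The coefficient matrix of the bilinear form attached to the graph `Γ`: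
`-2` on the diagonal, `1` for adjacent pairs of vertices, `0` otherwise. -/
def cartan (G : SimpleGraph I) [DecidableRel G.Adj] : Matrix I I ℤ :=
  Matrix.of fun i j => if i = j then -2 else if G.Adj i j then 1 else 0

/-- The symmetric bilinear form `B` on `ℤ^I` determined by
`B(e_i,e_i) = -2`, `B(e_i,e_j) = 1` for adjacent `i ≠ j`, and `0` otherwise. -/
def Bform (G : SimpleGraph I) [DecidableRel G.Adj] : LinearMap.BilinForm ℤ (I → ℤ) :=
  Matrix.toBilin' (cartan G)

/-- Negative definiteness of the induced real bilinear form on `ℝ^I`. -/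
def NegDef (G : SimpleGraph I) [DecidableRel G.Adj] : Prop :=
  ∀ v : I → ℝ, v ≠ 0 → (∑ i, ∑ j, v i * (cartan G i j : ℝ) * v j) < 0

/-- `α ∈ ℤ^I` is a root when `B(α,α) = -2`. -/
def IsRoot (G : SimpleGraph I) [DecidableRel G.Adj] (α : I → ℤ) : Prop :=
  Bform G α α = -2

variable (G : SimpleGraph I) [DecidableRel G.Adj]

lemma cartan_symm (i j : I) : cartan G i j = cartan G j i := by
  rcases eq_or_ne i j with h | h
  · subst h; rfl
  · by_cases hadj : G.Adj i j
    · simp [cartan, h, h.symm, hadj, hadj.symm]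
    · have h' : ¬ G.Adj j i := fun hc => hadj hc.symm
      simp [cartan, h, h.symm, hadj, h']

lemma Bform_apply (v w : I → ℤ) :
    Bform G v w = ∑ i, ∑ j, v i * cartan G i j * w j :=
  Matrix.toBilin'_apply _ _ _

lemma Bform_comm (v w : I → ℤ) : Bform G v w = Bform G w v := by
  rw [Bform_apply, Bform_apply, Finset.sum_comm]
  exact Finset.sum_congr rfl fun j _ => Finset.sum_congr rfl fun i _ => by
    rw [cartan_symm]; ring

lemma cartan_diag (i : I) : cartan G i i = -2 := by simp [cartan]

lemma Bform_single (i j : I) :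
    Bform G (Pi.single i 1) (Pi.single j 1) = cartan G i j := by
  rw [Bform_apply]
  simp [Pi.single_apply]

lemma Bform_single_self (i : I) :
    Bform G (Pi.single i 1) (Pi.single i 1) = -2 := by
  rw [Bform_single, cartan_diag]

/-- `IsRoot` is preserved by negation. -/
lemma isRoot_neg {α : I → ℤ} (h : IsRoot G α) : IsRoot G (-α) := by
  unfold IsRoot at h ⊢
  simpa [map_neg] using h

/-- The simple root `e_i` is a root. -/
lemma isRoot_single (i : I) : IsRoot G (Pi.single i 1) := Bform_single_self G i

/-- The reflection `s_i : v ↦ v + B(v,e_i)·e_i`. -/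
def reflect (i : I) (v : I → ℤ) : I → ℤ :=
  v + Bform G v (Pi.single i 1) • Pi.single i 1

/-- The reflection `s_i` as a linear map. -/
def reflectLM (i : I) : (I → ℤ) →ₗ[ℤ] (I → ℤ) :=
  LinearMap.id + (LinearMap.toSpanSingleton ℤ (I → ℤ) (Pi.single i 1)).comp
    ((Bform G).flip (Pi.single i 1))

lemma reflectLM_apply (i : I) (v : I → ℤ) : reflectLM G i v = reflect G i v := by
  simp [reflectLM, reflect, LinearMap.toSpanSingleton_apply]

/-- Reflections are isometries of `B`. -/
lemma Bform_reflect (i : I) (v w : I → ℤ) :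
    Bform G (reflect G i v) (reflect G i w) = Bform G v w := by
  have h1 : Bform G (Pi.single i 1) w = Bform G w (Pi.single i 1) := Bform_comm G _ _
  simp only [reflect, map_add, map_smul, LinearMap.add_apply, LinearMap.smul_apply,
    smul_eq_mul, Bform_single_self, h1]
  ring

lemma reflect_reflect (i : I) (v : I → ℤ) : reflect G i (reflect G i v) = v := by
  have h : Bform G (reflect G i v) (Pi.single i 1) = - Bform G v (Pi.single i 1) := by
    simp only [reflect, map_add, LinearMap.add_apply, map_smul, LinearMap.smul_apply,
      smul_eq_mul, Bform_single_self]
    ring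
  conv_lhs => rw [reflect, h]
  rw [reflect, neg_smul, add_neg_cancel_right]

/-- The reflection `s_i` as a linear automorphism of `ℤ^I`. -/
def reflectEquiv (i : I) : (I → ℤ) ≃ₗ[ℤ] (I → ℤ) where
  __ := reflectLM G i
  invFun := reflect G i
  left_inv := fun v => by
    show reflect G i (reflectLM G i v) = v
    rw [reflectLM_apply]; exact reflect_reflect G i v
  right_inv := fun v => by
    show reflectLM G i (reflect G i v) = v
    rw [reflectLM_apply]; exact reflect_reflect G i v

lemma reflectEquiv_apply (i : I) (v : I → ℤ) : reflectEquiv G i v = reflect G i v :=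
  reflectLM_apply G i v

/-- The Weyl group `W`: the subgroup of the group of `ℤ`-linear automorphisms
of `ℤ^I` generated by the reflections `s_i`. -/
def Weyl : Subgroup ((I → ℤ) ≃ₗ[ℤ] (I → ℤ)) :=
  Subgroup.closure (Set.range (reflectEquiv G))

lemma reflectEquiv_inv (i : I) : (reflectEquiv G i)⁻¹ = reflectEquiv G i := by
  apply LinearEquiv.toLinearMap_injective
  apply LinearMap.ext
  intro v
  have h1 : ((reflectEquiv G i)⁻¹ : (I → ℤ) ≃ₗ[ℤ] (I → ℤ)) v = (reflectEquiv G i).symm v := rfl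
  show ((reflectEquiv G i)⁻¹ : (I → ℤ) ≃ₗ[ℤ] (I → ℤ)) v = reflectEquiv G i v
  rw [h1, reflectEquiv_apply]
  rfl

lemma isRoot_reflect (i : I) {α : I → ℤ} (h : IsRoot G α) : IsRoot G (reflect G i α) := by
  unfold IsRoot at h ⊢
  rw [Bform_reflect]; exact h

/-- Every element of the Weyl group maps roots to roots. -/
lemma weyl_isRoot {w : (I → ℤ) ≃ₗ[ℤ] (I → ℤ)} (hw : w ∈ Weyl G) :
    ∀ α : I → ℤ, IsRoot G α → IsRoot G (w α) := by
  have main : (∀ α, IsRoot G α → IsRoot G (w α)) ∧ (∀ α, IsRoot G α → IsRoot G (w⁻¹ α)) := by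
    induction hw using Subgroup.closure_induction with
    | mem x hx =>
        obtain ⟨i, rfl⟩ := hx
        constructor
        · intro α hα; rw [reflectEquiv_apply]; exact isRoot_reflect G i hα
        · intro α hα; rw [reflectEquiv_inv, reflectEquiv_apply]; exact isRoot_reflect G i hα
    | one => exact ⟨fun α h => h, fun α h => by simpa using h⟩
    | mul x y hx hy ihx ihy =>
        refine ⟨fun α h => ?_, fun α h => ?_⟩
        · exact ihx.1 _ (ihy.1 _ h)
        · rw [mul_inv_rev]
          exact ihy.2 _ (ihx.2 _ h)
    | inv x hx ihx =>
        refine ⟨ihx.2, fun α h => ?_⟩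
        rw [inv_inv]
        exact ihx.1 α h
  exact main.1

/-- The type of roots. -/
def Root := {α : I → ℤ // IsRoot G α}

/-- The simple root `e_i` as an element of `Root`. -/
def simpleRoot (i : I) : Root G := ⟨Pi.single i 1, isRoot_single G i⟩

/-- Negation of a root. -/
def negRoot (α : Root G) : Root G := ⟨-α.1, isRoot_neg G α.2⟩

/-- The generator `s_i` as an element of the Weyl group. -/
def sGen (i : I) : ↥(Weyl G) := ⟨reflectEquiv G i, Subgroup.subset_closure ⟨i, rfl⟩⟩

/-- Action of a Weyl group element on roots. -/
def rootSmul (w : ↥(Weyl G)) (α : Root G) : Root G :=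
  ⟨(w : (I → ℤ) ≃ₗ[ℤ] (I → ℤ)) α.1, weyl_isRoot G w.2 α.1 α.2⟩

/-- The equivalence relation identifying a root `α` with `±α`. -/
def rootSetoid : Setoid (Root G) where
  r α β := α.1 = β.1 ∨ α.1 = -β.1
  iseqv := by
    refine ⟨fun α => Or.inl rfl, ?_, ?_⟩
    · rintro α β (h | h)
      · exact Or.inl h.symm
      · exact Or.inr (by rw [h, neg_neg])
    · rintro α β γ (h₁ | h₁) (h₂ | h₂)
      · exact Or.inl (h₁.trans h₂)
      · exact Or.inr (h₁.trans h₂)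
      · exact Or.inr (by rw [h₁, h₂])
      · exact Or.inl (by rw [h₁, h₂, neg_neg])

/-- `Φ/±`: the quotient of the set of roots by the involution `α ↦ -α`. -/
def RootMod := Quotient (rootSetoid G)

/-- The class of a root in `Φ/±`. -/
def rcls (α : Root G) : RootMod G := Quotient.mk (rootSetoid G) α

/-- The class `[e_i]` of a simple root in `Φ/±`. -/
def cls (i : I) : RootMod G := rcls G (simpleRoot G i)

/-- Action of a Weyl group element on `Φ/±`. -/
def rmodSmul (w : ↥(Weyl G)) : RootMod G → RootMod G :=
  Quotient.map (rootSmul G w) (by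
    rintro α β (h | h)
    · exact Or.inl (by simp [rootSmul, h])
    · exact Or.inr (by simp [rootSmul, h, map_neg]))

/-- The action of `w ∈ W` on `ℤΦ` (the free abelian group on the roots). -/
def wZPhi (w : ↥(Weyl G)) : (Root G →₀ ℤ) →+ (Root G →₀ ℤ) :=
  Finsupp.mapDomain.addMonoidHom (rootSmul G w)

/-- The action of `w ∈ W` on `ℤ[Φ/±]`. -/
def wZQ (w : ↥(Weyl G)) : (RootMod G →₀ ℤ) →+ (RootMod G →₀ ℤ) :=
  Finsupp.mapDomain.addMonoidHom (rmodSmul G w)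

/-- The canonical projection `π : ℤΦ → ℤ[Φ/±]`, `T_α ↦ t_{[α]}`. -/
def piHom : (Root G →₀ ℤ) →+ (RootMod G →₀ ℤ) :=
  Finsupp.mapDomain.addMonoidHom (rcls G)

/-- The action of `w ∈ W` on `ℚ ⊗ ℤΦ = (Φ →₀ ℚ)`. -/
def wZPhiQ (w : ↥(Weyl G)) : (Root G →₀ ℚ) →ₗ[ℚ] (Root G →₀ ℚ) :=
  Finsupp.lmapDomain ℚ ℚ (rootSmul G w)

/-- The action of `w ∈ W` on `ℚ ⊗ ℤ[Φ/±] = (Φ/± →₀ ℚ)`. -/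
def wZQQ (w : ↥(Weyl G)) : (RootMod G →₀ ℚ) →ₗ[ℚ] (RootMod G →₀ ℚ) :=
  Finsupp.lmapDomain ℚ ℚ (rmodSmul G w)

/-- The projection `ℚ ⊗ ℤΦ → ℚ ⊗ ℤ[Φ/±]`. -/
def piHomQ : (Root G →₀ ℚ) →ₗ[ℚ] (RootMod G →₀ ℚ) :=
  Finsupp.lmapDomain ℚ ℚ (rcls G)

/-- The subgroup `P̄ ⊂ ℤΦ` generated by the elements `T_α - T_{-α}`. -/
def Pbar : AddSubgroup (Root G →₀ ℤ) :=
  AddSubgroup.closure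
    {x | ∃ α : Root G, x = Finsupp.single α 1 - Finsupp.single (negRoot G α) 1}

end ADE


open ADE

section AuxProof
open ADE
variable {I : Type*} [Fintype I] [DecidableEq I]
variable (G : SimpleGraph I) [DecidableRel G.Adj]

lemma cartan_offdiag_nonneg {i j : I} (h : i ≠ j) : 0 ≤ cartan G i j := by
  simp only [cartan, Matrix.of_apply]
  rw [if_neg h]
  split <;> omega

lemma bform_self_neg (hneg : NegDef G) {v : I → ℤ} (hv : v ≠ 0) : Bform G v v < 0 := by
  have hv' : (fun i => (v i : ℝ)) ≠ 0 := by
    intro h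
    apply hv
    funext i
    have h2 : ((v i : ℝ)) = 0 := by simpa using congrFun h i
    exact_mod_cast h2
  have h := hneg _ hv'
  have hcast : ((Bform G v v : ℤ) : ℝ) < 0 := by
    rw [Bform_apply]
    push_cast
    simpa using h
  exact_mod_cast hcast

lemma bform_self_dvd (v : I → ℤ) : (2 : ℤ) ∣ Bform G v v := by
  have key : ((Bform G v v : ℤ) : ZMod 2) = 0 := by
    rw [Bform_apply]
    push_cast
    rw [← Finset.sum_product']
    rw [← Finset.diag_union_offDiag Finset.univ,
      Finset.sum_union (Finset.disjoint_diag_offDiag _)]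
    have hdiag : ∑ p ∈ Finset.univ.diag,
        ((v (p : I × I).1 : ZMod 2) * (cartan G p.1 p.2 : ZMod 2) * (v p.2 : ZMod 2)) = 0 := by
      rw [Finset.sum_diag]
      refine Finset.sum_eq_zero fun i _ => ?_
      rw [cartan_diag]
      have h2 : ((-2 : ℤ) : ZMod 2) = 0 := by decide
      rw [h2, mul_zero, zero_mul]
    have hoff : ∑ p ∈ Finset.univ.offDiag,
        ((v (p : I × I).1 : ZMod 2) * (cartan G p.1 p.2 : ZMod 2) * (v p.2 : ZMod 2)) = 0 := by
      apply Finset.sum_involution (fun p _ => p.swap)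
      · intro p _
        have hsym : ((v p.swap.1 : ZMod 2) * (cartan G p.swap.1 p.swap.2 : ZMod 2) * (v p.swap.2 : ZMod 2))
            = ((v p.1 : ZMod 2) * (cartan G p.1 p.2 : ZMod 2) * (v p.2 : ZMod 2)) := by
          rw [Prod.fst_swap, Prod.snd_swap, cartan_symm]
          ring
        rw [hsym, CharTwo.add_self_eq_zero]
      · intro p hp _
        rw [Finset.mem_offDiag] at hp
        intro h
        exact hp.2.2 ((congrArg Prod.fst h).symm)
      · intro p hp
        show p.swap.swap = p
        exact Prod.swap_swap p
      · intro p hp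
        rw [Finset.mem_offDiag] at hp
        refine Finset.mem_offDiag.mpr ⟨Finset.mem_univ _, Finset.mem_univ _, ?_⟩
        rw [Prod.fst_swap, Prod.snd_swap]
        exact fun h => hp.2.2 h.symm
    rw [hdiag, hoff, add_zero]
  have := (ZMod.intCast_zmod_eq_zero_iff_dvd (Bform G v v) 2).mp key
  exact_mod_cast this

lemma bform_self_le (hneg : NegDef G) {v : I → ℤ} (hv : v ≠ 0) : Bform G v v ≤ -2 := by
  have h1 := bform_self_neg G hneg hv
  have h2 := bform_self_dvd G v
  omega

lemma root_ne_zero {α : I → ℤ} (hα : IsRoot G α) : α ≠ 0 := by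
  intro h
  rw [h] at hα
  unfold IsRoot at hα
  simp at hα

lemma bform_expand_add (α β : I → ℤ) :
    Bform G (α + β) (α + β) = Bform G α α + 2 * Bform G α β + Bform G β β := by
  have := Bform_comm G β α
  simp only [map_add, LinearMap.add_apply]
  rw [this]
  ring

lemma bform_expand_sub (α β : I → ℤ) :
    Bform G (α - β) (α - β) = Bform G α α - 2 * Bform G α β + Bform G β β := by
  have := Bform_comm G β α
  simp only [map_sub, LinearMap.sub_apply]
  rw [this]
  ring

lemma root_bform_le (hneg : NegDef G) {α β : I → ℤ} (hα : IsRoot G α) (hβ : IsRoot G β)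
    (h : α ≠ -β) : Bform G α β ≤ 1 := by
  have hne : α + β ≠ 0 := by
    intro h0
    exact h (by linear_combination (norm := abel) h0)
  have h1 := bform_self_le G hneg hne
  rw [bform_expand_add] at h1
  unfold IsRoot at hα hβ
  omega

lemma root_bform_ge (hneg : NegDef G) {α β : I → ℤ} (hα : IsRoot G α) (hβ : IsRoot G β)
    (h : α ≠ β) : -1 ≤ Bform G α β := by
  have hne : α - β ≠ 0 := sub_ne_zero_of_ne h
  have h1 := bform_self_le G hneg hne
  rw [bform_expand_sub] at h1
  unfold IsRoot at hα hβ
  omega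

lemma root_eq_of_bform {α β : I → ℤ} (hneg : NegDef G) (hα : IsRoot G α) (hβ : IsRoot G β)
    (h : Bform G α β ≤ -2) : α = β := by
  by_contra hne
  have := root_bform_ge G hneg hα hβ hne
  omega


/-- Every root has all coordinates `≥ 0` or all `≤ 0`. -/
lemma root_sign (hneg : NegDef G) {α : I → ℤ} (hα : IsRoot G α) :
    (∀ i, 0 ≤ α i) ∨ (∀ i, α i ≤ 0) := by
  by_contra hc
  push_neg at hc
  obtain ⟨⟨i1, hi1⟩, ⟨i2, hi2⟩⟩ := hc
  set p : I → ℤ := fun i => max (α i) 0 with hpdef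
  set m : I → ℤ := fun i => max (-(α i)) 0 with hmdef
  have hsplit : α = p - m := by
    funext i
    simp only [hpdef, hmdef, Pi.sub_apply]
    omega
  have hpne : p ≠ 0 := by
    intro h0
    have := congrFun h0 i2
    simp only [hpdef, Pi.zero_apply] at this
    omega
  have hmne : m ≠ 0 := by
    intro h0
    have := congrFun h0 i1
    simp only [hmdef, Pi.zero_apply] at this
    omega
  have hBpm : 0 ≤ Bform G p m := by
    rw [Bform_apply]
    refine Finset.sum_nonneg fun i _ => Finset.sum_nonneg fun j _ => ?_
    rcases eq_or_ne i j with rfl | hij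
    · have hz : p i * m i = 0 := by
        simp only [hpdef, hmdef]
        rcases le_or_gt (α i) 0 with h | h
        · rw [max_eq_right h, zero_mul]
        · rw [max_eq_right (by omega : -(α i) ≤ 0), mul_zero]
      calc (0:ℤ) = p i * cartan G i i * m i := by
            rw [mul_assoc, mul_comm (cartan G i i), ← mul_assoc, hz, zero_mul]
        _ ≤ _ := le_refl _
    · refine mul_nonneg (mul_nonneg ?_ (cartan_offdiag_nonneg G hij)) ?_
      · exact le_max_right _ _
      · exact le_max_right _ _
  have hexp : Bform G α α = Bform G p p - 2 * Bform G p m + Bform G m m := by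
    rw [hsplit]
    exact bform_expand_sub G p m
  have h1 := bform_self_le G hneg hpne
  have h2 := bform_self_le G hneg hmne
  unfold IsRoot at hα
  omega

/-- The height of a vector: sum of coordinates. -/
def htv (v : I → ℤ) : ℤ := ∑ i, v i

lemma htv_single (i : I) : htv (Pi.single i 1 : I → ℤ) = 1 := by
  simp [htv, Finset.sum_pi_single']

lemma htv_add (v w : I → ℤ) : htv (v + w) = htv v + htv w := by
  simp [htv, Finset.sum_add_distrib]

lemma htv_sub (v w : I → ℤ) : htv (v - w) = htv v - htv w := by
  simp [htv, Finset.sum_sub_distrib]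

lemma htv_neg (v : I → ℤ) : htv (-v) = -htv v := by
  simp [htv]

lemma htv_smul (c : ℤ) (v : I → ℤ) : htv (c • v) = c * htv v := by
  simp [htv, Finset.mul_sum]

lemma pos_single (i : I) : ∀ j, (0:ℤ) ≤ (Pi.single i 1 : I → ℤ) j := by
  intro j
  rcases eq_or_ne j i with rfl | h
  · simp
  · simp [Pi.single_apply, h]

lemma htv_pos {α : I → ℤ} (hα : IsRoot G α) (hpos : ∀ i, 0 ≤ α i) : 1 ≤ htv α := by
  have hne := root_ne_zero G hα
  obtain ⟨i, hi⟩ := Function.ne_iff.mp hne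
  have hi' : 1 ≤ α i := by
    have := hpos i
    simp only [Pi.zero_apply] at hi
    omega
  calc (1:ℤ) ≤ α i := hi'
    _ ≤ ∑ j, α j := Finset.single_le_sum (fun j _ => hpos j) (Finset.mem_univ i)

lemma support_single {α : I → ℤ} (hα : IsRoot G α) (i : I) (h : ∀ j, j ≠ i → α j = 0) :
    α = Pi.single i 1 ∨ α = -Pi.single i 1 := by
  set c := α i with hc
  have heq : α = c • (Pi.single i 1 : I → ℤ) := by
    funext j
    rcases eq_or_ne j i with rfl | hj
    · simp [hc]
    · simp [Pi.single_apply, hj, h j hj]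
  have hB : Bform G α α = c * c * (-2) := by
    rw [heq]
    simp only [map_smul, LinearMap.smul_apply, smul_eq_mul, Bform_single_self]
    ring
  unfold IsRoot at hα
  have hcc : c * c = 1 := by linarith
  have : c = 1 ∨ c = -1 := by
    rcases Int.eq_one_or_neg_one_of_mul_eq_one' hcc with ⟨h1, _⟩ | ⟨h1, _⟩
    · exact Or.inl h1
    · exact Or.inr h1
  rcases this with h1 | h1
  · left; rw [heq, h1, one_smul]
  · right; rw [heq, h1]
    funext j
    simp

lemma ht_one_simple {α : I → ℤ} (hα : IsRoot G α) (hpos : ∀ i, 0 ≤ α i) (h1 : htv α = 1) :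
    ∃ i, α = Pi.single i 1 := by
  have hne := root_ne_zero G hα
  obtain ⟨i, hi⟩ := Function.ne_iff.mp hne
  have hi' : 1 ≤ α i := by
    have := hpos i
    simp only [Pi.zero_apply] at hi
    omega
  have hrest : ∀ j, j ≠ i → α j = 0 := by
    intro j hj
    by_contra hne'
    have hj' : 1 ≤ α j := by have := hpos j; omega
    have hdecomp : htv α = α i + ∑ k ∈ Finset.univ.erase i, α k := by
      rw [htv, ← Finset.add_sum_erase _ _ (Finset.mem_univ i)]
    have hsum : α j ≤ ∑ k ∈ Finset.univ.erase i, α k :=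
      Finset.single_le_sum (fun k _ => hpos k) (Finset.mem_erase.mpr ⟨hj, Finset.mem_univ j⟩)
    omega
  rcases support_single G hα i hrest with h | h
  · exact ⟨i, h⟩
  · exfalso
    have := hpos i
    rw [h] at this
    simp at this

lemma root_pos_ne_neg {α β : I → ℤ} (hα : IsRoot G α)
    (hpα : ∀ i, 0 ≤ α i) (hpβ : ∀ i, 0 ≤ β i) : α ≠ -β := by
  intro h
  apply root_ne_zero G hα
  funext i
  have h1 := hpα i
  have h2 := hpβ i
  have h3 := congrFun h i
  simp only [Pi.neg_apply] at h3
  simp only [Pi.zero_apply]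
  omega



lemma reflect_coord (i : I) (v : I → ℤ) {j : I} (hj : j ≠ i) : reflect G i v j = v j := by
  simp [reflect, Pi.single_apply, hj]

lemma reflect_pos (hneg : NegDef G) {α : I → ℤ} {i : I} (hα : IsRoot G α)
    (hpos : ∀ j, 0 ≤ α j) (hne : α ≠ Pi.single i 1) : ∀ j, 0 ≤ reflect G i α j := by
  have hroot := isRoot_reflect G i hα
  rcases root_sign G hneg hroot with h | h
  · exact h
  · exfalso
    have hz : ∀ j, j ≠ i → α j = 0 := by
      intro j hj
      have h1 := h j
      rw [reflect_coord G i α hj] at h1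
      have := hpos j
      omega
    rcases support_single G hα i hz with h' | h'
    · exact hne h'
    · have := hpos i
      rw [h'] at this
      simp at this

lemma htv_reflect (i : I) (v : I → ℤ) :
    htv (reflect G i v) = htv v + Bform G v (Pi.single i 1) := by
  rw [reflect, htv_add, htv_smul, htv_single, mul_one]

lemma exists_desc {α : I → ℤ} (hα : IsRoot G α) (hpos : ∀ i, 0 ≤ α i) :
    ∃ i, 0 < α i ∧ Bform G α (Pi.single i 1) < 0 := by
  have hrep : (∑ i, (α i) • (Pi.single i 1 : I → ℤ)) = α := by
    have h1 : ∀ i, (α i) • (Pi.single i 1 : I → ℤ) = Pi.single i (α i) := by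
      intro i
      funext j
      rcases eq_or_ne j i with rfl | hj
      · simp
      · simp [Pi.single_apply, hj]
    rw [Finset.sum_congr rfl fun i _ => h1 i]
    exact Finset.univ_sum_single α
  have hsum : ∑ i, α i * Bform G α (Pi.single i 1) = -2 := by
    have : Bform G α α = Bform G α (∑ i, (α i) • (Pi.single i 1 : I → ℤ)) := by rw [hrep]
    rw [hα] at this   -- hα : IsRoot, defeq to Bform G α α = -2
    rw [map_sum] at this
    simp only [map_smul, smul_eq_mul] at this
    omega
  have hlt : ∑ i, α i * Bform G α (Pi.single i 1) < ∑ _i : I, (0:ℤ) := by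
    rw [hsum, Finset.sum_const, smul_zero]
    omega
  obtain ⟨i, _, hi⟩ := Finset.exists_lt_of_sum_lt hlt
  have hai : 0 ≤ α i := hpos i
  have h1 : α i ≠ 0 := by
    intro h0
    rw [h0, zero_mul] at hi
    omega
  have h2 : Bform G α (Pi.single i 1) < 0 := by
    by_contra hcon
    push_neg at hcon
    have := mul_nonneg hai hcon
    omega
  exact ⟨i, by omega, h2⟩

lemma trans_single (hneg : NegDef G) :
    ∀ (n : ℕ) (α : I → ℤ), IsRoot G α → (∀ i, 0 ≤ α i) → htv α ≤ (n : ℤ) →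
    ∃ (w : ↥(Weyl G)) (i : I), (w : (I → ℤ) ≃ₗ[ℤ] (I → ℤ)) (Pi.single i 1) = α := by
  intro n
  induction n with
  | zero =>
    intro α hα hpos hht
    have := htv_pos G hα hpos
    omega
  | succ n ih =>
    intro α hα hpos hht
    obtain ⟨i, _, hB⟩ := exists_desc G hα hpos
    by_cases he : α = Pi.single i 1
    · refine ⟨1, i, ?_⟩
      rw [← he]
      rfl
    · set α' := reflect G i α with hα'
      have hroot' := isRoot_reflect G i hα
      have hpos' := reflect_pos G hneg hα hpos he
      have hht' : htv α' ≤ (n : ℤ) := by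
        rw [hα', htv_reflect]
        omega
      obtain ⟨w, j, hw⟩ := ih α' hroot' hpos' hht'
      refine ⟨sGen G i * w, j, ?_⟩
      show (reflectEquiv G i) ((w : (I → ℤ) ≃ₗ[ℤ] (I → ℤ)) (Pi.single j 1)) = α
      rw [hw, reflectEquiv_apply, hα']
      exact reflect_reflect G i α

lemma weyl_bform {w : (I → ℤ) ≃ₗ[ℤ] (I → ℤ)} (hw : w ∈ Weyl G) :
    ∀ v u, Bform G (w v) (w u) = Bform G v u := by
  have main : (∀ v u, Bform G (w v) (w u) = Bform G v u) ∧
      (∀ v u, Bform G (w⁻¹ v) (w⁻¹ u) = Bform G v u) := by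
    induction hw using Subgroup.closure_induction with
    | mem x hx =>
      obtain ⟨i, rfl⟩ := hx
      constructor
      · intro v u
        rw [reflectEquiv_apply, reflectEquiv_apply]
        exact Bform_reflect G i v u
      · intro v u
        rw [reflectEquiv_inv, reflectEquiv_apply, reflectEquiv_apply]
        exact Bform_reflect G i v u
    | one => exact ⟨fun _ _ => rfl, fun _ _ => rfl⟩
    | mul x y hx hy ihx ihy =>
      constructor
      · intro v u
        exact (ihx.1 _ _).trans (ihy.1 _ _)
      · intro v u
        rw [mul_inv_rev]
        exact (ihy.2 _ _).trans (ihx.2 _ _)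
    | inv x hx ihx =>
      refine ⟨ihx.2, fun v u => ?_⟩
      rw [inv_inv]
      exact ihx.1 v u
  exact main.1

lemma refl_of_pos (hneg : NegDef G) {γ : I → ℤ} (hγ : IsRoot G γ) (hpos : ∀ i, 0 ≤ γ i) :
    ∃ u : ↥(Weyl G), ∀ v, (u : (I → ℤ) ≃ₗ[ℤ] (I → ℤ)) v = v + Bform G v γ • γ := by
  obtain ⟨w, i, hw⟩ := trans_single G hneg (htv γ).toNat γ hγ hpos (Int.self_le_toNat _)
  refine ⟨w * sGen G i * w⁻¹, fun v => ?_⟩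
  have hcoe : ((w * sGen G i * w⁻¹ : ↥(Weyl G)) : (I → ℤ) ≃ₗ[ℤ] (I → ℤ)) v
      = (w : (I → ℤ) ≃ₗ[ℤ] (I → ℤ))
        ((reflectEquiv G i) (((w : (I → ℤ) ≃ₗ[ℤ] (I → ℤ))).symm v)) := rfl
  rw [hcoe, reflectEquiv_apply]
  have hwinv : ((w : (I → ℤ) ≃ₗ[ℤ] (I → ℤ))).symm γ = Pi.single i 1 := by
    rw [← hw]
    exact LinearEquiv.symm_apply_apply _ _
  have hform : Bform G (((w : (I → ℤ) ≃ₗ[ℤ] (I → ℤ))).symm v) (Pi.single i 1) = Bform G v γ := by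
    rw [← hwinv]
    have hmem : ((w : (I → ℤ) ≃ₗ[ℤ] (I → ℤ)))⁻¹ ∈ Weyl G := (w⁻¹ : ↥(Weyl G)).2
    exact weyl_bform G hmem v γ
  rw [reflect, hform, map_add, map_smul, hw]
  rw [LinearEquiv.apply_symm_apply]

lemma exists_root_reflection (hneg : NegDef G) {γ : I → ℤ} (hγ : IsRoot G γ) :
    ∃ u : ↥(Weyl G), ∀ v, (u : (I → ℤ) ≃ₗ[ℤ] (I → ℤ)) v = v + Bform G v γ • γ := by
  rcases root_sign G hneg hγ with h | h
  · exact refl_of_pos G hneg hγ h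
  · obtain ⟨u, hu⟩ := refl_of_pos G hneg (isRoot_neg G hγ) (fun i => by
      have := h i; simp only [Pi.neg_apply]; omega)
    refine ⟨u, fun v => ?_⟩
    rw [hu v, map_neg, smul_neg, neg_smul, neg_neg]



/-- Application of a Weyl group element. -/
def wap (u : ↥(Weyl G)) (v : I → ℤ) : I → ℤ := (u : (I → ℤ) ≃ₗ[ℤ] (I → ℤ)) v

lemma wap_mul (u w : ↥(Weyl G)) (v : I → ℤ) : wap G (u * w) v = wap G u (wap G w v) := rfl

lemma wap_one (v : I → ℤ) : wap G 1 v = v := rfl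

lemma wap_neg (u : ↥(Weyl G)) (v : I → ℤ) : wap G u (-v) = -(wap G u v) :=
  map_neg (u : (I → ℤ) ≃ₗ[ℤ] (I → ℤ)) v

lemma wap_inv_wap (u : ↥(Weyl G)) (v : I → ℤ) : wap G u⁻¹ (wap G u v) = v :=
  LinearEquiv.symm_apply_apply _ _

lemma wap_inj (u : ↥(Weyl G)) : Function.Injective (wap G u) :=
  fun _ _ h => (u : (I → ℤ) ≃ₗ[ℤ] (I → ℤ)).injective h

lemma wap_root (u : ↥(Weyl G)) {α : I → ℤ} (h : IsRoot G α) : IsRoot G (wap G u α) :=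
  weyl_isRoot G u.2 α h

lemma wap_sGen (i : I) (v : I → ℤ) : wap G (sGen G i) v = reflect G i v :=
  reflectEquiv_apply G i v

/-- `u` maps `x` to `±y`. -/
def UpTo (u : ↥(Weyl G)) (x y : I → ℤ) : Prop := wap G u x = y ∨ wap G u x = -y

lemma upTo_inv {u : ↥(Weyl G)} {x y : I → ℤ} (h : UpTo G u x y) : UpTo G u⁻¹ y x := by
  rcases h with h | h
  · left
    rw [← h, wap_inv_wap]
  · right
    have hy : y = -(wap G u x) := by rw [h, neg_neg]
    rw [hy, wap_neg, wap_inv_wap]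

lemma upTo_comp {w u : ↥(Weyl G)} {x y z : I → ℤ} (h1 : UpTo G w x y) (h2 : UpTo G u y z) :
    UpTo G (u * w) x z := by
  rcases h1 with h1 | h1 <;> rcases h2 with h2 | h2
  · exact Or.inl (by rw [wap_mul, h1, h2])
  · exact Or.inr (by rw [wap_mul, h1, h2])
  · exact Or.inr (by rw [wap_mul, h1, wap_neg, h2])
  · exact Or.inl (by rw [wap_mul, h1, wap_neg, h2, neg_neg])

lemma ne_of_upTo {u : ↥(Weyl G)} {α β α' β' : I → ℤ} (hne : α ≠ β) (hne' : α ≠ -β)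
    (h1 : UpTo G u α α') (h2 : UpTo G u β β') : α' ≠ β' := by
  intro h
  subst h
  rcases h1 with h1 | h1 <;> rcases h2 with h2 | h2
  · exact hne (wap_inj G u (h1.trans h2.symm))
  · exact hne' (wap_inj G u (h1.trans (by rw [wap_neg, h2, neg_neg])))
  · exact hne' (wap_inj G u (h1.trans (by rw [wap_neg, h2])))
  · exact hne (wap_inj G u (h1.trans h2.symm))

lemma add_neg_two_smul (a : I → ℤ) : a + (-2 : ℤ) • a = -a := by
  have h : (-2 : ℤ) • a = -a + -a := by
    rw [show (-2 : ℤ) = -1 + -1 by norm_num, add_smul, neg_one_smul]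
  rw [h]
  abel

lemma step (hneg : NegDef G) (α β : I → ℤ) (hα : IsRoot G α) (hβ : IsRoot G β)
    (hpα : ∀ i, 0 ≤ α i) (hpβ : ∀ i, 0 ≤ β i) (hne : α ≠ β)
    (hns : ¬ ∃ i, α = Pi.single i 1) :
    ∃ (u : ↥(Weyl G)) (α' β' : I → ℤ), IsRoot G α' ∧ IsRoot G β' ∧
      (∀ i, 0 ≤ α' i) ∧ (∀ i, 0 ≤ β' i) ∧
      htv α' + htv β' < htv α + htv β ∧
      UpTo G u α α' ∧ UpTo G u β β' := by
  have hα' : Bform G α α = -2 := hα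
  have hβ' : Bform G β β = -2 := hβ
  have hα1 : 1 ≤ htv α := htv_pos G hα hpα
  have hβ1 : 1 ≤ htv β := htv_pos G hβ hpβ
  obtain ⟨i₀, hi₀pos, hB⟩ := exists_desc G hα hpα
  have hαne : α ≠ Pi.single i₀ 1 := fun h => hns ⟨i₀, h⟩
  have hBm1 : Bform G α (Pi.single i₀ 1) = -1 := by
    have := root_bform_ge G hneg hα (isRoot_single G i₀) hαne
    omega
  have hα2 : 2 ≤ htv α := by
    by_contra h
    push_neg at h
    obtain ⟨k, hk⟩ := ht_one_simple G hα hpα (by omega)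
    exact hns ⟨k, hk⟩
  have hrefl_eq : reflect G i₀ α = α - Pi.single i₀ 1 := by
    rw [reflect, hBm1, neg_one_smul, ← sub_eq_add_neg]
  have hraroot : IsRoot G (reflect G i₀ α) := isRoot_reflect G i₀ hα
  have hrapos := reflect_pos G hneg hα hpα hαne
  have hhtra : htv (reflect G i₀ α) = htv α - 1 := by
    rw [htv_reflect, hBm1]
    ring
  by_cases hb0 : β = Pi.single i₀ 1
  · -- β is the simple root e_{i₀}
    refine ⟨sGen G i₀, reflect G i₀ α, Pi.single i₀ 1, hraroot, isRoot_single G i₀,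
      hrapos, pos_single i₀, ?_, Or.inl (wap_sGen G i₀ α), Or.inr ?_⟩
    · rw [hhtra, htv_single, hb0, htv_single]
      omega
    · rw [wap_sGen, hb0, reflect, Bform_single_self]
      exact add_neg_two_smul _
  · have hbneg : β ≠ -Pi.single i₀ 1 := by
      intro h
      have := hpβ i₀
      rw [h] at this
      simp at this
    have hble : Bform G β (Pi.single i₀ 1) ≤ 1 :=
      root_bform_le G hneg hβ (isRoot_single G i₀) hbneg
    by_cases hb1 : Bform G β (Pi.single i₀ 1) = 1
    · have hcle : Bform G α β ≤ 1 :=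
        root_bform_le G hneg hα hβ (root_pos_ne_neg G hα hpα hpβ)
      have hcge : -1 ≤ Bform G α β := root_bform_ge G hneg hα hβ hne
      by_cases hc : Bform G α β = -1
      · -- B(α,β) = -1 : then α = β + e_{i₀}; reflect in β
        have hd : IsRoot G (α - β) := by
          unfold IsRoot
          rw [bform_expand_sub, hα', hβ', hc]
          norm_num
        have hdB : Bform G (α - β) (Pi.single i₀ 1) = -2 := by
          simp only [map_sub, LinearMap.sub_apply]
          rw [hBm1, hb1]
          norm_num
        have heq : α - β = Pi.single i₀ 1 :=
          root_eq_of_bform G hneg hd (isRoot_single G i₀) (le_of_eq hdB)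
        obtain ⟨u, hu⟩ := exists_root_reflection G hneg hβ
        refine ⟨u, Pi.single i₀ 1, β, isRoot_single G i₀, hβ, pos_single i₀, hpβ, ?_,
          Or.inl ?_, Or.inr ?_⟩
        · rw [htv_single]
          omega
        · show (u : (I → ℤ) ≃ₗ[ℤ] (I → ℤ)) α = Pi.single i₀ 1
          rw [hu α, hc, neg_one_smul, ← sub_eq_add_neg, heq]
        · show (u : (I → ℤ) ≃ₗ[ℤ] (I → ℤ)) β = -β
          rw [hu β, hβ']
          exact add_neg_two_smul β
      · -- B(α,β) ∈ {0,1} : reflect in γ = α - e_{i₀}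
        have hγroot : IsRoot G (α - Pi.single i₀ 1) := by rw [← hrefl_eq]; exact hraroot
        obtain ⟨u, hu⟩ := exists_root_reflection G hneg hγroot
        have hBαγ : Bform G α (α - Pi.single i₀ 1) = -1 := by
          simp only [map_sub]
          rw [hα', hBm1]
          norm_num
        have huα : (u : (I → ℤ) ≃ₗ[ℤ] (I → ℤ)) α = Pi.single i₀ 1 := by
          rw [hu α, hBαγ, neg_one_smul, ← sub_eq_add_neg]
          abel
        have hBβγ : Bform G β (α - Pi.single i₀ 1) = Bform G β α - 1 := by
          simp only [map_sub]
          rw [hb1]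
        rcases (by omega : Bform G α β = 0 ∨ Bform G α β = 1) with hc0 | hc1
        · have hβα : Bform G β α = 0 := by rw [Bform_comm]; exact hc0
          have huβ : (u : (I → ℤ) ≃ₗ[ℤ] (I → ℤ)) β = β - (α - Pi.single i₀ 1) := by
            rw [hu β, hBβγ, hβα]
            rw [show ((0:ℤ) - 1) = -1 by norm_num, neg_one_smul, ← sub_eq_add_neg]
          set δ := β - (α - Pi.single i₀ 1) with hδdef
          have hδroot : IsRoot G δ := by
            rw [← huβ]
            exact weyl_isRoot G u.2 β hβ
          have hhtδ : htv δ = htv β - htv α + 1 := by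
            rw [hδdef, htv_sub, htv_sub, htv_single]
            ring
          rcases root_sign G hneg hδroot with hp | hp
          · refine ⟨u, Pi.single i₀ 1, δ, isRoot_single G i₀, hδroot, pos_single i₀, hp, ?_,
              Or.inl huα, Or.inl huβ⟩
            rw [htv_single, hhtδ]
            omega
          · refine ⟨u, Pi.single i₀ 1, -δ, isRoot_single G i₀, isRoot_neg G hδroot,
              pos_single i₀,
              (fun j => by have := hp j; simp only [Pi.neg_apply]; omega), ?_,
              Or.inl huα, Or.inr (by rw [neg_neg]; exact huβ)⟩
            rw [htv_single, htv_neg, hhtδ]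
            omega
        · have hβα : Bform G β α = 1 := by rw [Bform_comm]; exact hc1
          have huβ : (u : (I → ℤ) ≃ₗ[ℤ] (I → ℤ)) β = β := by
            rw [hu β, hBβγ, hβα]
            norm_num
          refine ⟨u, Pi.single i₀ 1, β, isRoot_single G i₀, hβ, pos_single i₀, hpβ, ?_,
            Or.inl huα, Or.inl huβ⟩
          rw [htv_single]
          omega
    · -- B(β, e_{i₀}) ≤ 0 : use the simple reflection s_{i₀}
      have hb0' : Bform G β (Pi.single i₀ 1) ≤ 0 := by omega
      refine ⟨sGen G i₀, reflect G i₀ α, reflect G i₀ β, hraroot, isRoot_reflect G i₀ hβ,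
        hrapos, reflect_pos G hneg hβ hpβ hb0, ?_,
        Or.inl (wap_sGen G i₀ α), Or.inl (wap_sGen G i₀ β)⟩
      rw [hhtra, htv_reflect]
      omega



lemma trans_pair (hneg : NegDef G) :
    ∀ (n : ℕ) (α β : I → ℤ), IsRoot G α → IsRoot G β → (∀ i, 0 ≤ α i) → (∀ i, 0 ≤ β i) →
    α ≠ β → htv α + htv β ≤ (n : ℤ) →
    ∃ (w : ↥(Weyl G)) (i j : I), i ≠ j ∧
      UpTo G w (Pi.single i 1) α ∧ UpTo G w (Pi.single j 1) β := by
  intro n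
  induction n with
  | zero =>
    intro α β hα hβ hpα hpβ hne hht
    have h1 := htv_pos G hα hpα
    have h2 := htv_pos G hβ hpβ
    simp only [Nat.cast_zero] at hht
    omega
  | succ n ih =>
    intro α β hα hβ hpα hpβ hne hht
    by_cases hsa : ∃ i, α = Pi.single i 1
    · by_cases hsb : ∃ j, β = Pi.single j 1
      · obtain ⟨i, hi⟩ := hsa
        obtain ⟨j, hj⟩ := hsb
        refine ⟨1, i, j, ?_, Or.inl (by rw [wap_one, hi]), Or.inl (by rw [wap_one, hj])⟩
        intro h
        rw [h] at hi
        exact hne (hi.trans hj.symm)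
      · -- α simple, β not simple: descend on β
        obtain ⟨u, β', α', hβ'r, hα'r, hβ'p, hα'p, hlt, hUβ, hUα⟩ :=
          step G hneg β α hβ hα hpβ hpα (Ne.symm hne) hsb
        have hne' : α' ≠ β' :=
          ne_of_upTo G hne (root_pos_ne_neg G hα hpα hpβ) hUα hUβ
        have hht' : htv α' + htv β' ≤ (n : ℤ) := by
          push_cast at hht ⊢
          omega
        obtain ⟨w, i, j, hij, h1, h2⟩ := ih α' β' hα'r hβ'r hα'p hβ'p hne' hht'
        exact ⟨u⁻¹ * w, i, j, hij, upTo_comp G h1 (upTo_inv G hUα),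
          upTo_comp G h2 (upTo_inv G hUβ)⟩
    · obtain ⟨u, α', β', hα'r, hβ'r, hα'p, hβ'p, hlt, hUα, hUβ⟩ :=
        step G hneg α β hα hβ hpα hpβ hne hsa
      have hne' : α' ≠ β' :=
        ne_of_upTo G hne (root_pos_ne_neg G hα hpα hpβ) hUα hUβ
      have hht' : htv α' + htv β' ≤ (n : ℤ) := by
        push_cast at hht ⊢
        omega
      obtain ⟨w, i, j, hij, h1, h2⟩ := ih α' β' hα'r hβ'r hα'p hβ'p hne' hht'
      exact ⟨u⁻¹ * w, i, j, hij, upTo_comp G h1 (upTo_inv G hUα),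
        upTo_comp G h2 (upTo_inv G hUβ)⟩



lemma upTo_congr {w : ↥(Weyl G)} {x γ δ : I → ℤ} (h : UpTo G w x γ) (hγ : γ = δ ∨ γ = -δ) :
    UpTo G w x δ := by
  rcases h with h | h <;> rcases hγ with h2 | h2
  · exact Or.inl (h.trans h2)
  · exact Or.inr (h.trans h2)
  · exact Or.inr (by rw [h, h2])
  · exact Or.inl (by rw [h, h2, neg_neg])

lemma rmod_mul (u w : ↥(Weyl G)) (c : RootMod G) :
    rmodSmul G (u * w) c = rmodSmul G u (rmodSmul G w c) :=
  Quotient.inductionOn c fun _ => rfl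

lemma rmod_one (c : RootMod G) : rmodSmul G 1 c = c :=
  Quotient.inductionOn c fun _ => rfl

lemma rmod_inj (w : ↥(Weyl G)) : Function.Injective (rmodSmul G w) := by
  have hleft : ∀ c, rmodSmul G w⁻¹ (rmodSmul G w c) = c := by
    intro c
    rw [← rmod_mul, inv_mul_cancel, rmod_one]
  exact Function.LeftInverse.injective hleft

lemma rmod_cls_of_upTo {w : ↥(Weyl G)} {i : I} {α : Root G}
    (h : UpTo G w (Pi.single i 1) α.1) : rmodSmul G w (cls G i) = rcls G α := by
  show Quotient.mk (rootSetoid G) (rootSmul G w (simpleRoot G i)) = Quotient.mk (rootSetoid G) α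
  exact Quotient.sound h

lemma pos_rep (hneg : NegDef G) (α : Root G) :
    ∃ γ : I → ℤ, IsRoot G γ ∧ (∀ i, 0 ≤ γ i) ∧ (γ = α.1 ∨ γ = -α.1) := by
  rcases root_sign G hneg α.2 with h | h
  · exact ⟨α.1, α.2, h, Or.inl rfl⟩
  · exact ⟨-α.1, isRoot_neg G α.2,
      fun i => by have := h i; simp only [Pi.neg_apply]; omega, Or.inr rfl⟩

lemma cls_trans (hneg : NegDef G) (c : RootMod G) :
    ∃ (w : ↥(Weyl G)) (i : I), rmodSmul G w (cls G i) = c := by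
  obtain ⟨α, rfl⟩ := Quotient.exists_rep c
  obtain ⟨γ, hr, hp, hs⟩ := pos_rep G hneg α
  obtain ⟨w, i, hw⟩ := trans_single G hneg (htv γ).toNat γ hr hp (Int.self_le_toNat _)
  exact ⟨w, i, rmod_cls_of_upTo G (upTo_congr G (Or.inl hw) hs)⟩

lemma cls_pair (hneg : NegDef G) {c d : RootMod G} (hcd : c ≠ d) :
    ∃ (w : ↥(Weyl G)) (i j : I), i ≠ j ∧
      rmodSmul G w (cls G i) = c ∧ rmodSmul G w (cls G j) = d := by
  obtain ⟨α, rfl⟩ := Quotient.exists_rep c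
  obtain ⟨β, rfl⟩ := Quotient.exists_rep d
  obtain ⟨γa, hra, hpa, hsa⟩ := pos_rep G hneg α
  obtain ⟨γb, hrb, hpb, hsb⟩ := pos_rep G hneg β
  have hne : γa ≠ γb := by
    intro h
    apply hcd
    apply Quotient.sound
    rcases hsa with h1 | h1 <;> rcases hsb with h2 | h2
    · exact Or.inl (h1.symm.trans (h.trans h2))
    · exact Or.inr (h1.symm.trans (h.trans h2))
    · exact Or.inr (neg_eq_iff_eq_neg.mp (h1.symm.trans (h.trans h2)))
    · exact Or.inl (neg_inj.mp (h1.symm.trans (h.trans h2)))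
  obtain ⟨w, i, j, hij, h1, h2⟩ := trans_pair G hneg (htv γa + htv γb).toNat γa γb
    hra hrb hpa hpb hne (Int.self_le_toNat _)
  exact ⟨w, i, j, hij, rmod_cls_of_upTo G (upTo_congr G h1 hsa),
    rmod_cls_of_upTo G (upTo_congr G h2 hsb)⟩

lemma cls_adj {i j : I} (hadj : G.Adj i j) :
    ∃ w : ↥(Weyl G), rmodSmul G w (cls G i) = cls G j := by
  have hBij : Bform G (Pi.single i 1) (Pi.single j 1) = 1 := by
    rw [Bform_single]
    simp [cartan, hadj, hadj.ne]
  have h1 : reflect G j (Pi.single i 1) = Pi.single i 1 + Pi.single j 1 := by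
    rw [reflect, hBij, one_smul]
  have h2 : reflect G i (Pi.single i 1 + Pi.single j 1) = Pi.single j 1 := by
    have hB : Bform G (Pi.single i 1 + Pi.single j 1) (Pi.single i 1) = -1 := by
      simp only [map_add, LinearMap.add_apply]
      rw [Bform_single_self]
      rw [Bform_single, cartan_symm]
      simp [cartan, hadj, hadj.ne]
    rw [reflect, hB, neg_one_smul, ← sub_eq_add_neg]
    abel
  have hw : wap G (sGen G i * sGen G j) (Pi.single i 1) = Pi.single j 1 := by
    rw [wap_mul, wap_sGen, wap_sGen, h1, h2]
  exact ⟨sGen G i * sGen G j,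
    rmod_cls_of_upTo G (α := simpleRoot G j) (Or.inl hw)⟩

lemma cls_reach {i j : I} (p : G.Walk i j) :
    ∃ w : ↥(Weyl G), rmodSmul G w (cls G i) = cls G j := by
  induction p with
  | nil => exact ⟨1, rmod_one G _⟩
  | cons h p ih =>
    obtain ⟨w', hw'⟩ := ih
    obtain ⟨w₀, hw₀⟩ := cls_adj G h
    exact ⟨w' * w₀, by rw [rmod_mul, hw₀, hw']⟩

lemma coeff_inv (f : (RootMod G →₀ ℤ) →+ (RootMod G →₀ ℤ))
    (hequiv : ∀ (w : ↥(Weyl G)) (x : RootMod G →₀ ℤ), f (wZQ G w x) = wZQ G w (f x))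
    (w : ↥(Weyl G)) (c d : RootMod G) :
    f (Finsupp.single (rmodSmul G w c) 1) (rmodSmul G w d) = f (Finsupp.single c 1) d := by
  have h1 : wZQ G w (Finsupp.single c 1) = Finsupp.single (rmodSmul G w c) 1 := by
    simp only [wZQ, Finsupp.mapDomain.addMonoidHom_apply]
    exact Finsupp.mapDomain_single
  rw [← h1, hequiv w]
  simp only [wZQ, Finsupp.mapDomain.addMonoidHom_apply]
  exact Finsupp.mapDomain_apply (rmod_inj G w) _ _

end AuxProof



variable {I : Type*} [Fintype I] [DecidableEq I]

/-- a `W`-equivariant endomorphism of `ℤ[Φ/±]` whose matrix entries on the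
classes of simple roots are `±1` on the diagonal and `0` off the diagonal is `± id`. -/
theorem equivariant_endomorphism_eq_pm_id
    (G : SimpleGraph I) [DecidableRel G.Adj] (hconn : G.Connected) (hneg : NegDef G)
    (f : (RootMod G →₀ ℤ) →+ (RootMod G →₀ ℤ))
    (hequiv : ∀ (w : ↥(Weyl G)) (x : RootMod G →₀ ℤ), f (wZQ G w x) = wZQ G w (f x))
    (hdiag : ∀ i : I, f (Finsupp.single (cls G i) 1) (cls G i) = 1 ∨
                      f (Finsupp.single (cls G i) 1) (cls G i) = -1)
    (hoff : ∀ i j : I, i ≠ j → f (Finsupp.single (cls G i) 1) (cls G j) = 0) :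
    (∀ x, f x = x) ∨ (∀ x, f x = -x) := by
  obtain ⟨i₀⟩ := hconn.nonempty
  set E := f (Finsupp.single (cls G i₀) 1) (cls G i₀) with hE
  have hεconst : ∀ i : I, f (Finsupp.single (cls G i) 1) (cls G i) = E := by
    intro i
    obtain ⟨p⟩ := hconn.preconnected i i₀
    obtain ⟨w, hw⟩ := cls_reach G p
    rw [hE, ← hw]
    exact (coeff_inv G f hequiv w (cls G i) (cls G i)).symm
  have hdiag' : ∀ c : RootMod G, f (Finsupp.single c 1) c = E := by
    intro c
    obtain ⟨w, i, hw⟩ := cls_trans G hneg c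
    rw [← hw, coeff_inv G f hequiv]
    exact hεconst i
  have hoff' : ∀ c d : RootMod G, c ≠ d → f (Finsupp.single c 1) d = 0 := by
    intro c d hcd
    obtain ⟨w, i, j, hij, hwc, hwd⟩ := cls_pair G hneg hcd
    rw [← hwc, ← hwd, coeff_inv G f hequiv]
    exact hoff i j hij
  have hsingle : ∀ c : RootMod G, f (Finsupp.single c 1) = E • Finsupp.single c 1 := by
    intro c
    ext d
    rcases eq_or_ne d c with rfl | hdc
    · rw [hdiag' d]
      simp [Finsupp.smul_apply, Finsupp.single_eq_same]
    · rw [hoff' c d (Ne.symm hdc)]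
      simp [Finsupp.smul_apply, Finsupp.single_eq_of_ne' (Ne.symm hdc)]
  have key : ∀ (c : RootMod G) (n : ℤ),
      f (Finsupp.single c n) = E • Finsupp.single c n := by
    intro c n
    have h1 : Finsupp.single c n = n • Finsupp.single c (1:ℤ) := by
      rw [Finsupp.smul_single, smul_eq_mul, mul_one]
    rw [h1, AddMonoidHom.map_zsmul, hsingle, smul_comm]
  have hf : ∀ x, f x = E • x := by
    have heq : f = AddMonoidHom.mk' (fun y => E • y) (fun a b => smul_add E a b) :=
      Finsupp.addHom_ext fun c n => by rw [key]; rfl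
    intro x
    rw [heq]
    rfl
  rcases hdiag i₀ with h1 | h1
  · left
    intro x
    rw [hf x, ← hE] at *
    rw [show E = 1 from h1, one_smul]
  · right
    intro x
    rw [hf x, show E = (-1 : ℤ) from h1, neg_smul, one_smul]
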